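/- Let α be an algebraic integer of degree n over ℚ with minimal polynomial p_α ∈ ℤ[X]. Then R_α = Int(M_n^{p_α}(ℤ)); that is, a polynomial f ∈ ℚ[X] satisfies f(α) ∈ ℤ[α] if and only if f(M) ∈ M_n(ℤ) for every n×n integer matrix M with characteristic polynomial p_α. -/
import Mathlib

set_option maxHeartbeats 1000000
set_option synthInstance.maxHeartbeats 200000

open Polynomial

private lemma aeval_matrix_map {k : Type*} [Fintype k] [DecidableEq k]
    (M : Matrix k k ℤ) (g : Polynomial ℤ) :
    Polynomial.aeval (M.map (algebraMap ℤ ℚ)) (g.map (algebraMap ℤ ℚ))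
      = (Polynomial.aeval M g).map (algebraMap ℤ ℚ) := by
  rw [Polynomial.aeval_map_algebraMap]
  exact Polynomial.aeval_algHom_apply ((algebraMap ℤ ℚ).toIntAlgHom.mapMatrix) M g

/-- Let `α` be an algebraic integer of degree `n` over `ℚ` with (monic)
minimal polynomial `p_α ∈ ℤ[X]`.  Then `R_α = Int(M_n^{p_α}(ℤ))`: a polynomial `f ∈ ℚ[X]`
satisfies `f(α) ∈ ℤ[α]` if and only if `f(M) ∈ M_n(ℤ)` for every `n × n` integer matrix `M`
with characteristic polynomial `p_α` (values computed in `M_n(ℚ)`). -/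
theorem stmt_16 (α : AlgebraicClosure ℚ) (hα : IsIntegral ℤ α) (n : ℕ)
    (hdeg : (minpoly ℚ α).natDegree = n) (f : Polynomial ℚ) :
    Polynomial.aeval α f ∈ Algebra.adjoin ℤ {α} ↔
      ∀ M : Matrix (Fin n) (Fin n) ℤ, M.charpoly = minpoly ℤ α → ∀ i j : Fin n,
        (Polynomial.aeval (M.map (algebraMap ℤ ℚ)) f) i j ∈ (algebraMap ℤ ℚ).range := by
  have hmin : minpoly ℚ α = (minpoly ℤ α).map (algebraMap ℤ ℚ) :=
    minpoly.isIntegrallyClosed_eq_field_fractions' ℚ hα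
  constructor
  · intro h M hM i j
    rw [Algebra.adjoin_singleton_eq_range_aeval] at h
    obtain ⟨g, hg⟩ := h
    have hroot : Polynomial.aeval α (f - g.map (algebraMap ℤ ℚ)) = 0 := by
      rw [map_sub, Polynomial.aeval_map_algebraMap, sub_eq_zero]
      exact hg.symm
    obtain ⟨q, hq⟩ := minpoly.dvd ℚ α hroot
    have hf : f = g.map (algebraMap ℤ ℚ) + (minpoly ℤ α).map (algebraMap ℤ ℚ) * q := by
      rw [← hmin]
      linear_combination hq
    have hCH : Polynomial.aeval (M.map (algebraMap ℤ ℚ))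
        ((minpoly ℤ α).map (algebraMap ℤ ℚ)) = 0 := by
      rw [aeval_matrix_map, ← hM, Matrix.aeval_self_charpoly, Matrix.map_zero]
      exact map_zero _
    rw [hf, map_add, map_mul, hCH, zero_mul, add_zero, aeval_matrix_map]
    exact ⟨(Polynomial.aeval M g) i j, rfl⟩
  · intro h
    -- the power basis of ℤ[α]
    let pb := Algebra.adjoin.powerBasis' hα
    have hpbmin : minpoly ℤ α = minpoly ℤ pb.gen :=
      Algebra.adjoin.powerBasis'_minpoly_gen hα
    have hch : (Algebra.leftMulMatrix pb.basis pb.gen).charpoly = minpoly ℤ α := by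
      rw [charpoly_leftMulMatrix, ← hpbmin]
    have hd : pb.dim = n := by
      rw [Algebra.adjoin.powerBasis'_dim, ← hdeg, hmin,
        (minpoly.monic hα).natDegree_map]
    have hpos : 0 < pb.dim := by
      rw [Algebra.adjoin.powerBasis'_dim]
      exact minpoly.natDegree_pos hα
    set A := Algebra.leftMulMatrix pb.basis pb.gen with hA
    let e : Fin pb.dim ≃ Fin n := finCongr hd
    have hM : (Matrix.reindex e e A).charpoly = minpoly ℤ α := by
      rw [Matrix.charpoly_reindex, hch]
    have hentries : ∀ i j : Fin pb.dim,
        (Polynomial.aeval (A.map (algebraMap ℤ ℚ)) f) i j ∈ (algebraMap ℤ ℚ).range := by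
      intro i j
      have hmapre : (Matrix.reindex e e A).map (algebraMap ℤ ℚ)
          = Matrix.reindex e e (A.map (algebraMap ℤ ℚ)) := by
        ext i' j'
        simp
      have hkey2 : Polynomial.aeval ((Matrix.reindex e e A).map (algebraMap ℤ ℚ)) f
          = Matrix.reindex e e (Polynomial.aeval (A.map (algebraMap ℤ ℚ)) f) := by
        rw [hmapre]
        have h3 := Polynomial.aeval_algHom_apply (Matrix.reindexAlgEquiv ℚ ℚ e).toAlgHom
          (A.map (algebraMap ℤ ℚ)) f
        simpa [Matrix.reindexAlgEquiv_apply] using h3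
      have := h (Matrix.reindex e e A) hM (e i) (e j)
      rw [hkey2] at this
      simpa using this
    -- clear denominators of f
    obtain ⟨b, hb⟩ := IsLocalization.integerNormalization_map_to_map (nonZeroDivisors ℤ) f
    set g := IsLocalization.integerNormalization (nonZeroDivisors ℤ) f with hgdef
    have hbne : (b : ℤ) ≠ 0 := nonZeroDivisors.coe_ne_zero b
    -- key matrix identity
    have hkey : (Polynomial.aeval A g).map (algebraMap ℤ ℚ)
        = (b : ℤ) • Polynomial.aeval (A.map (algebraMap ℤ ℚ)) f := by
      rw [← aeval_matrix_map, hb, map_zsmul]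
    have hdvd : ∀ i : Fin pb.dim, (b : ℤ) ∣ (Polynomial.aeval A g) i ⟨0, hpos⟩ := by
      intro i
      obtain ⟨k, hk⟩ := hentries i ⟨0, hpos⟩
      refine ⟨k, ?_⟩
      have h1 := congrArg (fun N => N i ⟨0, hpos⟩) hkey
      simp only [Matrix.map_apply, Matrix.smul_apply] at h1
      rw [← hk] at h1
      have h2 : (((Polynomial.aeval A) g i ⟨0, hpos⟩ : ℤ) : ℚ) = (((b : ℤ) * k : ℤ) : ℚ) := by
        push_cast
        simpa [algebraMap_int_eq, eq_intCast, zsmul_eq_mul] using h1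
      exact_mod_cast h2
    set s := Polynomial.aeval pb.gen g with hs
    have hAg : Polynomial.aeval A g = Algebra.leftMulMatrix pb.basis s := by
      rw [hs, hA]
      exact Polynomial.aeval_algHom_apply (Algebra.leftMulMatrix pb.basis) pb.gen g
    have hrepr : ∀ i : Fin pb.dim, (b : ℤ) ∣ pb.basis.repr s i := by
      intro i
      have := hdvd i
      rwa [hAg, Algebra.leftMulMatrix_eq_repr_mul, pb.basis_eq_pow,
        show ((⟨0, hpos⟩ : Fin pb.dim) : ℕ) = 0 from rfl, pow_zero, mul_one] at this
    -- build the witness t with s = b • t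
    set t : Algebra.adjoin ℤ {α} :=
      ∑ i : Fin pb.dim, (pb.basis.repr s i / (b : ℤ)) • pb.basis i with ht
    have hst : s = (b : ℤ) • t := by
      rw [ht, Finset.smul_sum]
      conv_lhs => rw [← pb.basis.sum_repr s]
      refine Finset.sum_congr rfl fun i _ => ?_
      rw [smul_smul, Int.mul_ediv_cancel' (hrepr i)]
    -- transfer to the field
    have hval : Polynomial.aeval α g = (b : ℤ) • (t : AlgebraicClosure ℚ) := by
      have h1 : Polynomial.aeval α g
          = ((Algebra.adjoin ℤ {α}).val) s := by
        rw [hs, ← Polynomial.aeval_algHom_apply]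
        congr 1
        rw [Algebra.adjoin.powerBasis'_gen]
        rfl
      rw [h1, hst, map_zsmul]
      rfl
    have hfa : (b : ℤ) • Polynomial.aeval α f = (b : ℤ) • (t : AlgebraicClosure ℚ) := by
      rw [← hval, ← map_zsmul (Polynomial.aeval α) (b : ℤ) f, ← hb,
        Polynomial.aeval_map_algebraMap]
    have : Polynomial.aeval α f = (t : AlgebraicClosure ℚ) :=
      smul_right_injective (AlgebraicClosure ℚ) hbne hfa
    rw [this]
    exact t.2
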